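/- arXiv:2205.11176 — 6 statements merged into one kernel-verified Lean document; each statement's English description precedes it below -/
import Mathlib

section
/- Let L₁ and L₂ be principal 𝕋-bundles and let T : C₀^𝕋(L₁) → C₀^𝕋(L₂) be a (not necessarily continuous) linear orthogonality preserving map. For every s ∈ L₂ with δ_s∘T ≠ 0, the set supp(δ_s∘T) is nonempty and is exactly one 𝕋-orbit: for any t₁, t₂ ∈ supp(δ_s∘T) one has t₁ ∈ 𝕋t₂ (so there exists t ∈ L̂₁ with supp(δ_s∘T) = 𝕋t). -/
open scoped ZeroAtInfty

noncomputable section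

/-- A principal `𝕋`-bundle: a `𝕋`-symmetric subset `L` of an ambient complex topological
vector space not containing `0` such that `L ∪ {0}` is compact. -/
structure TBundle (E : Type*) [AddCommGroup E] [Module ℂ E] [TopologicalSpace E] where
  carrier : Set E
  smul_mem : ∀ z : ℂ, ‖z‖ = 1 → ∀ t ∈ carrier, z • t ∈ carrier
  zero_not_mem : (0 : E) ∉ carrier
  isCompact_union : IsCompact (carrier ∪ {0})

variable {E F : Type*} [AddCommGroup E] [Module ℂ E] [TopologicalSpace E]
  [AddCommGroup F] [Module ℂ F] [TopologicalSpace F]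

/-- `L̂ = L ∪ {0}`. -/
def TBundle.hat (L : TBundle E) : Set E := L.carrier ∪ {0}

/-- A subset `S` is `𝕋`-symmetric if `𝕋S = S`. -/
def TSymm (S : Set E) : Prop := ∀ z : ℂ, ‖z‖ = 1 → ∀ x ∈ S, z • x ∈ S

/-- Rotation of a point of `L` by a unimodular scalar. -/
def TBundle.sm (L : TBundle E) (z : ℂ) (hz : ‖z‖ = 1) (t : L.carrier) : L.carrier :=
  ⟨z • (t : E), L.smul_mem z hz t t.2⟩

theorem TBundle.hat_smul_mem (L : TBundle E) (z : ℂ) (hz : ‖z‖ = 1) {x : E}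
    (hx : x ∈ L.hat) : z • x ∈ L.hat := by
  rcases hx with hx | hx
  · exact Or.inl (L.smul_mem z hz x hx)
  · simp only [Set.mem_singleton_iff] at hx
    subst hx
    right; simp

/-- Rotation of a point of `L̂` by a unimodular scalar. -/
def TBundle.hsm (L : TBundle E) (z : ℂ) (hz : ‖z‖ = 1) (t : L.hat) : L.hat :=
  ⟨z • (t : E), L.hat_smul_mem z hz t.2⟩

/-- The commutative JB*-triple `C₀^𝕋(L)` of `𝕋`-equivariant elements of `C₀(L, ℂ)`,
as a (closed) submodule of `C₀(L, ℂ)`. -/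
def TBundle.C0T (L : TBundle E) : Submodule ℂ C₀(↥L.carrier, ℂ) where
  carrier := {a | ∀ (z : ℂ) (hz : ‖z‖ = 1) (t : L.carrier), a (L.sm z hz t) = z * a t}
  add_mem' := by
    intro a b ha hb z hz t
    simp [ha z hz t, hb z hz t, mul_add]
  zero_mem' := by intro z hz t; simp
  smul_mem' := by
    intro c a ha z hz t
    simp [ha z hz t]
    ring

/-- `T` preserves orthogonality: functions with zero pointwise product are mapped to
functions with zero pointwise product. -/
def OrthogonalityPreserving (L₁ : TBundle E) (L₂ : TBundle F)
    (T : L₁.C0T →ₗ[ℂ] L₂.C0T) : Prop :=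
  ∀ a b : L₁.C0T, (∀ t : L₁.carrier, a.1 t * b.1 t = 0) →
    ∀ s : L₂.carrier, (T a).1 s * (T b).1 s = 0

/-- The support of the functional `δ_s ∘ T`: all `t ∈ L̂₁` such that every `𝕋`-symmetric
relatively open neighbourhood `U` of `t` in `L̂₁` contains the cozero set of some
`a ∈ C₀^𝕋(L₁)` with `T(a)(s) ≠ 0`. -/
def suppDelta {L₁ : TBundle E} {L₂ : TBundle F} (T : L₁.C0T →ₗ[ℂ] L₂.C0T)
    (s : L₂.carrier) : Set E :=
  {t | t ∈ L₁.hat ∧ ∀ U : Set E, t ∈ U → TSymm U →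
      (∃ V : Set E, IsOpen V ∧ U = V ∩ L₁.hat) →
      ∃ a : L₁.C0T, (∀ x : L₁.carrier, (x : E) ∉ U → a.1 x = 0) ∧ (T a).1 s ≠ 0}

/-- The set `L₂^z` of points where `δ_s ∘ T` vanishes. -/
def Lzero {L₁ : TBundle E} {L₂ : TBundle F} (T : L₁.C0T →ₗ[ℂ] L₂.C0T) :
    Set L₂.carrier :=
  {s | ∀ a : L₁.C0T, (T a).1 s = 0}

/-- The set `L₂^d` of points where `δ_s ∘ T` is discontinuous (w.r.t. the sup norm). -/
def Ldisc {L₁ : TBundle E} {L₂ : TBundle F} (T : L₁.C0T →ₗ[ℂ] L₂.C0T) :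
    Set L₂.carrier :=
  {s | ¬ Continuous fun a : L₁.C0T => (T a).1 s}

/-- The set `L₂^{nz}` of points where `δ_s ∘ T` is nonzero. -/
def Lnz {L₁ : TBundle E} {L₂ : TBundle F} (T : L₁.C0T →ₗ[ℂ] L₂.C0T) :
    Set L₂.carrier :=
  {s | ∃ a : L₁.C0T, (T a).1 s ≠ 0}

/-- The set `L₂^c` of points where `δ_s ∘ T` is nonzero and norm-continuous. -/
def Lcont {L₁ : TBundle E} {L₂ : TBundle F} (T : L₁.C0T →ₗ[ℂ] L₂.C0T) :
    Set L₂.carrier :=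
  {s | (∃ a : L₁.C0T, (T a).1 s ≠ 0) ∧ Continuous fun a : L₁.C0T => (T a).1 s}

/-- The `𝕋`-orbit of a point. -/
def Torbit (t : E) : Set E := {x | ∃ z : ℂ, ‖z‖ = 1 ∧ x = z • t}

/-- The equivalence relation on `L̂` identifying points of the same `𝕋`-orbit. -/
def TBundle.orbitSetoid (L : TBundle E) : Setoid ↥L.hat where
  r t₁ t₂ := ∃ z : ℂ, ‖z‖ = 1 ∧ (t₂ : E) = z • (t₁ : E)
  iseqv := by
    constructor
    · intro t; exact ⟨1, by simp, by simp⟩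
    · rintro t₁ t₂ ⟨z, hz, h⟩
      have hz0 : z ≠ 0 := by intro h0; rw [h0] at hz; simp at hz
      refine ⟨z⁻¹, by simp [hz], ?_⟩
      rw [h, smul_smul, inv_mul_cancel₀ hz0, one_smul]
    · rintro t₁ t₂ t₃ ⟨z, hz, h⟩ ⟨w, hw, h'⟩
      exact ⟨w * z, by simp [hz, hw], by rw [h', h, smul_smul]⟩

/-- The cozero set of an element of `C₀^𝕋(L)`, as a subset of the ambient space. -/
def coz {L : TBundle E} (a : L.C0T) : Set E := (↑) '' {t : L.carrier | a.1 t ≠ 0}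

section MainStatements

variable [IsTopologicalAddGroup E] [ContinuousSMul ℂ E] [T2Space E]
  [Module ℝ E] [IsScalarTower ℝ ℂ E] [LocallyConvexSpace ℝ E]
  [IsTopologicalAddGroup F] [ContinuousSMul ℂ F] [T2Space F]
  [Module ℝ F] [IsScalarTower ℝ ℂ F] [LocallyConvexSpace ℝ F]


set_option linter.unusedSectionVars false

/-- The 𝕋-symmetric open core of a set. -/
def symmCore (V : Set E) : Set E := {x | ∀ z : ℂ, ‖z‖ = 1 → z • x ∈ V}

lemma symmCore_subset (V : Set E) : symmCore V ⊆ V := fun x hx => by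
  simpa using hx 1 (by simp)

lemma tsymm_symmCore (V : Set E) : TSymm (symmCore V) := by
  intro z hz x hx w hw
  rw [smul_smul]
  exact hx (w * z) (by rw [norm_mul, hz, hw, mul_one])

lemma isOpen_symmCore (V : Set E) (hV : IsOpen V) : IsOpen (symmCore V) := by
  rw [isOpen_iff_forall_mem_open]
  intro x hx
  have hs : IsCompact (Metric.sphere (0 : ℂ) 1) := isCompact_sphere 0 1
  have hn : IsOpen ((fun p : ℂ × E => p.1 • p.2) ⁻¹' V) := hV.preimage continuous_smul
  have hsub : Metric.sphere (0 : ℂ) 1 ×ˢ ({x} : Set E) ⊆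
      (fun p : ℂ × E => p.1 • p.2) ⁻¹' V := by
    rintro ⟨z, y⟩ ⟨hz, hy⟩
    simp only [Set.mem_singleton_iff] at hy
    subst hy
    exact hx z (mem_sphere_zero_iff_norm.mp hz)
  obtain ⟨u, v, hu, hv, hsu, hxv, huv⟩ :=
    generalized_tube_lemma hs isCompact_singleton hn hsub
  refine ⟨v, ?_, hv, hxv rfl⟩
  intro y hy z hz
  exact huv (Set.mk_mem_prod (hsu (mem_sphere_zero_iff_norm.mpr hz)) hy)

lemma exists_symm_sep {t₁ t₂ : E} (h : ¬ ∃ z : ℂ, ‖z‖ = 1 ∧ t₁ = z • t₂) :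
    ∃ V₁ V₂ : Set E, IsOpen V₁ ∧ IsOpen V₂ ∧ TSymm V₁ ∧ TSymm V₂ ∧
      t₁ ∈ V₁ ∧ t₂ ∈ V₂ ∧ Disjoint V₁ V₂ := by
  have hc : ∀ t : E, IsCompact ((fun z : ℂ => z • t) '' Metric.sphere (0 : ℂ) 1) :=
    fun t => (isCompact_sphere 0 1).image (continuous_id.smul continuous_const)
  have hdisj : Disjoint ((fun z : ℂ => z • t₁) '' Metric.sphere (0 : ℂ) 1)
      ((fun z : ℂ => z • t₂) '' Metric.sphere (0 : ℂ) 1) := by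
    rw [Set.disjoint_left]
    rintro x ⟨z₁, hz₁, rfl⟩ ⟨z₂, hz₂, he⟩
    rw [mem_sphere_zero_iff_norm] at hz₁ hz₂
    have hz₁0 : z₁ ≠ 0 := by intro h0; rw [h0] at hz₁; simp at hz₁
    apply h
    refine ⟨z₁⁻¹ * z₂, by rw [norm_mul, norm_inv, hz₁, hz₂, inv_one, one_mul], ?_⟩
    have he' : z₁ • t₁ = z₂ • t₂ := he.symm
    have : t₁ = z₁⁻¹ • (z₁ • t₁) := by rw [smul_smul, inv_mul_cancel₀ hz₁0, one_smul]
    rw [this, he', smul_smul]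
  obtain ⟨W₁, W₂, hW₁, hW₂, hKW₁, hKW₂, hd⟩ :=
    SeparatedNhds.of_isCompact_isCompact (hc t₁) (hc t₂) hdisj
  refine ⟨symmCore W₁, symmCore W₂, isOpen_symmCore _ hW₁, isOpen_symmCore _ hW₂,
    tsymm_symmCore _, tsymm_symmCore _, ?_, ?_,
    hd.mono (symmCore_subset _) (symmCore_subset _)⟩
  · exact fun z hz => hKW₁ ⟨z, mem_sphere_zero_iff_norm.mpr hz, rfl⟩
  · exact fun z hz => hKW₂ ⟨z, mem_sphere_zero_iff_norm.mpr hz, rfl⟩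

lemma suppDelta_smul_mem {L₁ : TBundle E} {L₂ : TBundle F} {T : L₁.C0T →ₗ[ℂ] L₂.C0T}
    {s : L₂.carrier} {t : E} (ht : t ∈ suppDelta T s) (z : ℂ) (hz : ‖z‖ = 1) :
    z • t ∈ suppDelta T s := by
  obtain ⟨hhat, hP⟩ := ht
  have hz0 : z ≠ 0 := by intro h0; rw [h0] at hz; simp at hz
  refine ⟨L₁.hat_smul_mem z hz hhat, ?_⟩
  intro U hmem hsymm hrel
  have htU : t ∈ U := by
    have h1 : ‖z⁻¹‖ = 1 := by rw [norm_inv, hz, inv_one]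
    have := hsymm z⁻¹ h1 _ hmem
    rwa [smul_smul, inv_mul_cancel₀ hz0, one_smul] at this
  exact hP U htU hsymm hrel

lemma suppDelta_orbit {L₁ : TBundle E} {L₂ : TBundle F} (T : L₁.C0T →ₗ[ℂ] L₂.C0T)
    (hT : OrthogonalityPreserving L₁ L₂ T) (s : L₂.carrier) :
    ∀ t₁ ∈ suppDelta T s, ∀ t₂ ∈ suppDelta T s, ∃ z : ℂ, ‖z‖ = 1 ∧ t₁ = z • t₂ := by
  intro t₁ h₁ t₂ h₂
  by_contra h
  obtain ⟨V₁, V₂, ho₁, ho₂, hsy₁, hsy₂, hm₁, hm₂, hd⟩ := exists_symm_sep h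
  have hU₁ : TSymm (V₁ ∩ L₁.hat) := fun z hz x hx =>
    ⟨hsy₁ z hz x hx.1, L₁.hat_smul_mem z hz hx.2⟩
  have hU₂ : TSymm (V₂ ∩ L₁.hat) := fun z hz x hx =>
    ⟨hsy₂ z hz x hx.1, L₁.hat_smul_mem z hz hx.2⟩
  obtain ⟨a₁, hv₁, hn₁⟩ := h₁.2 (V₁ ∩ L₁.hat) ⟨hm₁, h₁.1⟩ hU₁ ⟨V₁, ho₁, rfl⟩
  obtain ⟨a₂, hv₂, hn₂⟩ := h₂.2 (V₂ ∩ L₁.hat) ⟨hm₂, h₂.1⟩ hU₂ ⟨V₂, ho₂, rfl⟩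
  have horth : ∀ t : L₁.carrier, a₁.1 t * a₂.1 t = 0 := by
    intro t
    by_contra hc
    have h1 : (t : E) ∈ V₁ ∩ L₁.hat := by
      by_contra hm; exact hc (by rw [hv₁ t hm, zero_mul])
    have h2 : (t : E) ∈ V₂ ∩ L₁.hat := by
      by_contra hm; exact hc (by rw [hv₂ t hm, mul_zero])
    exact (Set.disjoint_left.mp hd h1.1) h2.1
  rcases mul_eq_zero.mp (hT a₁ a₂ horth s) with h | h
  · exact hn₁ h
  · exact hn₂ h

lemma C0T_sum_apply {L : TBundle E} {ι : Type*} (s : Finset ι) (c : ι → L.C0T)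
    (t : L.carrier) :
    ((∑ i ∈ s, c i : L.C0T) : C₀(↥L.carrier, ℂ)) t = ∑ i ∈ s, (c i).1 t := by
  classical
  induction s using Finset.induction with
  | empty => simp
  | @insert _ _ h ih =>
    rw [Finset.sum_insert h, Finset.sum_insert h, ← ih]
    rfl

set_option maxHeartbeats 2000000 in
lemma suppDelta_nonempty (L₁ : TBundle E) (L₂ : TBundle F) (T : L₁.C0T →ₗ[ℂ] L₂.C0T)
    (s : L₂.carrier) (hs : ∃ a : L₁.C0T, (T a).1 s ≠ 0) :
    (suppDelta T s).Nonempty := by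
  classical
  by_contra hne
  rw [Set.not_nonempty_iff_eq_empty] at hne
  have H : ∀ t : ↥L₁.hat, ∃ U : Set E, ((t : E) ∈ U) ∧ TSymm U ∧
      (∃ Vo : Set E, IsOpen Vo ∧ U = Vo ∩ L₁.hat) ∧
      ∀ a : L₁.C0T, (∀ x : L₁.carrier, (x : E) ∉ U → a.1 x = 0) → (T a).1 s = 0 := by
    intro t
    have ht : (t : E) ∉ suppDelta T s := by rw [hne]; exact Set.notMem_empty _
    rw [suppDelta, Set.mem_setOf_eq] at ht
    push_neg at ht
    exact ht t.2
  choose U hmem hsymm hVex hkill using H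
  choose V hVo hUV using hVex
  have hc : IsCompact L₁.hat := L₁.isCompact_union
  have hcov : L₁.hat ⊆ ⋃ t : ↥L₁.hat, V t := by
    intro x hx
    refine Set.mem_iUnion.mpr ⟨⟨x, hx⟩, ?_⟩
    have := hmem ⟨x, hx⟩
    rw [hUV] at this
    exact this.1
  obtain ⟨I, hI⟩ := hc.elim_finite_subcover V hVo hcov
  haveI : CompactSpace ↥L₁.hat := isCompact_iff_compactSpace.mp hc
  set ι := {i : ↥L₁.hat // i ∈ I}
  let W : ι → Set ↥L₁.hat := fun i => Subtype.val ⁻¹' V i.1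
  have hWo : ∀ i, IsOpen (W i) := fun i => (hVo i.1).preimage continuous_subtype_val
  have hWcov : (Set.univ : Set ↥L₁.hat) ⊆ ⋃ i, W i := by
    intro x _
    obtain ⟨t, ht, hxt⟩ := Set.mem_iUnion₂.mp (hI x.2)
    exact Set.mem_iUnion.mpr ⟨⟨t, ht⟩, hxt⟩
  obtain ⟨f, hf⟩ := PartitionOfUnity.exists_isSubordinate isClosed_univ W hWo hWcov
  have hnorm : ∀ θ : ℝ, ‖Complex.exp (θ * Complex.I)‖ = 1 := fun θ => by
    exact Complex.norm_exp_ofReal_mul_I θ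
  let rot : ℝ → ↥L₁.hat → ↥L₁.hat := fun θ x =>
    ⟨Complex.exp (θ * Complex.I) • (x : E), L₁.hat_smul_mem _ (hnorm θ) x.2⟩
  let g : ι → ↥L₁.hat → ℝ → ℝ := fun i x θ => f i (rot θ x)
  have hrotx : ∀ x : ↥L₁.hat, Continuous fun θ : ℝ => rot θ x :=
    fun x => Continuous.subtype_mk ((Complex.continuous_exp.comp
      (Complex.continuous_ofReal.mul continuous_const)).smul continuous_const) _
  have hrotθ : ∀ θ : ℝ, Continuous fun x : ↥L₁.hat => rot θ x :=
    fun θ => Continuous.subtype_mk (continuous_const.smul continuous_subtype_val) _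
  have hgx : ∀ i x, Continuous (g i x) := fun i x =>
    (f i).continuous.comp (hrotx x)
  have hgθ : ∀ i (θ : ℝ), Continuous fun x => g i x θ := fun i θ =>
    (f i).continuous.comp (hrotθ θ)
  have hgint : ∀ i x (a b : ℝ), IntervalIntegrable (g i x) MeasureTheory.volume a b :=
    fun i x a b => (hgx i x).intervalIntegrable a b
  let ψ : ι → ↥L₁.hat → ℝ := fun i x =>
    (2 * Real.pi)⁻¹ * ∫ θ in (0:ℝ)..2 * Real.pi, g i x θ
  have two_pi_pos : (0:ℝ) < 2 * Real.pi := Real.two_pi_pos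
  have hπ : (0:ℝ) ≤ 2 * Real.pi := le_of_lt two_pi_pos
  have hψc : ∀ i, Continuous (ψ i) := by
    intro i
    let J := Set.Icc (0:ℝ) (2 * Real.pi)
    let Φ : C(↥J, ℝ) → ℝ := fun u =>
      ∫ θ in (0:ℝ)..2 * Real.pi, u (Set.projIcc 0 (2 * Real.pi) hπ θ)
    have hΦlip : LipschitzWith (Real.toNNReal (2 * Real.pi)) Φ := by
      apply LipschitzWith.of_dist_le_mul
      intro u v
      have hint : ∀ w : C(↥J, ℝ), Continuous fun θ : ℝ =>
          w (Set.projIcc 0 (2 * Real.pi) hπ θ) := fun w =>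
        w.continuous.comp continuous_projIcc
      rw [Real.dist_eq]
      have hsub : Φ u - Φ v = ∫ θ in (0:ℝ)..2 * Real.pi,
          (u (Set.projIcc 0 (2 * Real.pi) hπ θ) - v (Set.projIcc 0 (2 * Real.pi) hπ θ)) := by
        rw [intervalIntegral.integral_sub ((hint u).intervalIntegrable _ _)
          ((hint v).intervalIntegrable _ _)]
      rw [hsub]
      have hb : ‖∫ θ in (0:ℝ)..2 * Real.pi,
          (u (Set.projIcc 0 (2 * Real.pi) hπ θ) - v (Set.projIcc 0 (2 * Real.pi) hπ θ))‖ ≤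
          dist u v * |2 * Real.pi - 0| := by
        apply intervalIntegral.norm_integral_le_of_norm_le_const
        intro θ _
        rw [Real.norm_eq_abs, ← Real.dist_eq]
        exact ContinuousMap.dist_apply_le_dist _
      rw [Real.norm_eq_abs] at hb
      calc |∫ θ in (0:ℝ)..2 * Real.pi, (u (Set.projIcc 0 (2 * Real.pi) hπ θ) -
            v (Set.projIcc 0 (2 * Real.pi) hπ θ))| ≤ dist u v * |2 * Real.pi - 0| := hb
        _ = (Real.toNNReal (2 * Real.pi) : ℝ) * dist u v := by
            rw [sub_zero, abs_of_nonneg hπ, Real.coe_toNNReal _ hπ, mul_comm]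
    let G : C(↥L₁.hat × ↥J, ℝ) :=
      ⟨fun p => g i p.1 (p.2 : ℝ), (f i).continuous.comp
        (Continuous.subtype_mk ((Complex.continuous_exp.comp
          ((Complex.continuous_ofReal.comp (continuous_subtype_val.comp continuous_snd)).mul
            continuous_const)).smul (continuous_subtype_val.comp continuous_fst)) _)⟩
    have key : ∀ x, ψ i x = (2 * Real.pi)⁻¹ * Φ (G.curry x) := by
      intro x
      show (2 * Real.pi)⁻¹ * _ = (2 * Real.pi)⁻¹ * _
      congr 1
      apply intervalIntegral.integral_congr
      intro θ hθ
      rw [Set.uIcc_of_le hπ] at hθ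
      show g i x θ = g i x ((Set.projIcc 0 (2 * Real.pi) hπ θ : ↥J) : ℝ)
      rw [Set.projIcc_of_mem hπ hθ]
    have : ψ i = fun x => (2 * Real.pi)⁻¹ * Φ (G.curry x) := funext key
    rw [this]
    exact continuous_const.mul (hΦlip.continuous.comp G.curry.continuous)
  have hψ_abs : ∀ i x, |ψ i x| ≤ 1 := by
    intro i x
    have hb : ‖∫ θ in (0:ℝ)..2 * Real.pi, g i x θ‖ ≤ 1 * |2 * Real.pi - 0| := by
      apply intervalIntegral.norm_integral_le_of_norm_le_const
      intro θ _
      rw [Real.norm_eq_abs, abs_of_nonneg (f.nonneg i _)]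
      exact f.le_one i _
    rw [Real.norm_eq_abs] at hb
    calc |ψ i x| = (2 * Real.pi)⁻¹ * |∫ θ in (0:ℝ)..2 * Real.pi, g i x θ| := by
          rw [abs_mul, abs_of_nonneg (le_of_lt (inv_pos.mpr two_pi_pos))]
      _ ≤ (2 * Real.pi)⁻¹ * (1 * |2 * Real.pi - 0|) := by
          exact mul_le_mul_of_nonneg_left hb (le_of_lt (inv_pos.mpr two_pi_pos))
      _ = 1 := by
          rw [sub_zero, one_mul, abs_of_pos two_pi_pos,
            inv_mul_cancel₀ (ne_of_gt two_pi_pos)]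
  have per : ∀ i x, Function.Periodic (g i x) (2 * Real.pi) := by
    intro i x θ
    show f i (rot (θ + 2 * Real.pi) x) = f i (rot θ x)
    congr 1
    apply Subtype.ext
    show Complex.exp (((θ + 2 * Real.pi : ℝ) : ℂ) * Complex.I) • (x : E) = _
    have : ((θ + 2 * Real.pi : ℝ) : ℂ) * Complex.I =
        (θ : ℂ) * Complex.I + 2 * Real.pi * Complex.I := by push_cast; ring
    rw [this, Complex.exp_add, Complex.exp_two_pi_mul_I, mul_one]
  have hψ_inv : ∀ i (z : ℂ), ‖z‖ = 1 → ∀ (x : ↥L₁.hat)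
      (hzx : (z • (x : E)) ∈ L₁.hat), ψ i ⟨z • (x : E), hzx⟩ = ψ i x := by
    intro i z hz x hzx
    have hz' : ‖z‖ = 1 := hz
    have hze : Complex.exp ((z.arg : ℂ) * Complex.I) = z := by
      conv_rhs => rw [← Complex.norm_mul_exp_arg_mul_I z]
      rw [hz', Complex.ofReal_one, one_mul]
    have key : ∀ θ : ℝ, g i ⟨z • (x : E), hzx⟩ θ = g i x (θ + z.arg) := by
      intro θ
      show f i (rot θ ⟨z • (x : E), hzx⟩) = f i (rot (θ + z.arg) x)
      congr 1
      apply Subtype.ext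
      show Complex.exp ((θ : ℂ) * Complex.I) • (z • (x : E)) =
        Complex.exp (((θ + z.arg : ℝ) : ℂ) * Complex.I) • (x : E)
      rw [smul_smul]
      have hmul : Complex.exp ((θ : ℂ) * Complex.I) * z =
          Complex.exp (((θ + z.arg : ℝ) : ℂ) * Complex.I) := by
        conv_lhs => rw [← hze]
        rw [← Complex.exp_add]
        congr 1
        push_cast; ring
      rw [hmul]
    have h1 : ψ i ⟨z • (x : E), hzx⟩ =
        (2 * Real.pi)⁻¹ * ∫ θ in (0:ℝ)..2 * Real.pi, g i x (θ + z.arg) := by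
      show (2 * Real.pi)⁻¹ * _ = _
      congr 1
      exact intervalIntegral.integral_congr fun θ _ => key θ
    rw [h1, intervalIntegral.integral_comp_add_right (g i x) z.arg]
    have h2 := (per i x).intervalIntegral_add_eq z.arg 0
    rw [zero_add] at h2
    have h3 : (0:ℝ) + z.arg = z.arg := zero_add _
    have h4 : 2 * Real.pi + z.arg = z.arg + 2 * Real.pi := add_comm _ _
    rw [h3, h4, h2]
  have hψ_zero : ∀ i (x : ↥L₁.hat), (x : E) ∉ U i.1 → ψ i x = 0 := by
    intro i x hx
    have hz : ∀ θ : ℝ, g i x θ = 0 := by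
      intro θ
      have hns : rot θ x ∉ tsupport ⇑(f i) := by
        intro hmem
        have hW : rot θ x ∈ W i := hf i hmem
        have hU : ((rot θ x : ↥L₁.hat) : E) ∈ U i.1 := by
          rw [hUV]
          exact ⟨hW, (rot θ x).2⟩
        have := hsymm i.1 (Complex.exp ((-θ : ℝ) * Complex.I)) (hnorm (-θ)) _ hU
        rw [smul_smul] at this
        have he : Complex.exp (((-θ : ℝ) : ℂ) * Complex.I) *
            Complex.exp ((θ : ℝ) * Complex.I) = 1 := by
          rw [← Complex.exp_add]
          have : ((-θ : ℝ) : ℂ) * Complex.I + (θ : ℝ) * Complex.I = 0 := by push_cast; ring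
          rw [this, Complex.exp_zero]
        rw [he, one_smul] at this
        exact hx this
      show (f i) (rot θ x) = 0
      exact image_eq_zero_of_notMem_tsupport hns
    have : (∫ θ in (0:ℝ)..2 * Real.pi, g i x θ) = 0 := by
      rw [intervalIntegral.integral_congr (g := fun _ => (0:ℝ)) fun θ _ => hz θ]
      simp
    show (2 * Real.pi)⁻¹ * _ = 0
    rw [this, mul_zero]
  have hψ_sum : ∀ x : ↥L₁.hat, ∑ i : ι, ψ i x = 1 := by
    intro x
    have h1 : ∀ θ : ℝ, ∑ i : ι, g i x θ = 1 := by
      intro θ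
      have := f.sum_eq_one (Set.mem_univ (rot θ x))
      rwa [finsum_eq_sum_of_fintype] at this
    calc ∑ i : ι, ψ i x
        = (2 * Real.pi)⁻¹ * ∑ i : ι, ∫ θ in (0:ℝ)..2 * Real.pi, g i x θ := by
          rw [Finset.mul_sum]
      _ = (2 * Real.pi)⁻¹ * ∫ θ in (0:ℝ)..2 * Real.pi, ∑ i : ι, g i x θ := by
          rw [intervalIntegral.integral_finset_sum fun i _ => hgint i x 0 (2 * Real.pi)]
      _ = (2 * Real.pi)⁻¹ * ∫ θ in (0:ℝ)..2 * Real.pi, (1:ℝ) := by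
          rw [intervalIntegral.integral_congr fun θ _ => h1 θ]
      _ = 1 := by
          rw [intervalIntegral.integral_const, smul_eq_mul, sub_zero, mul_one,
            inv_mul_cancel₀ (ne_of_gt two_pi_pos)]
  -- the inclusion of the carrier into the hat
  let inc : L₁.carrier → ↥L₁.hat := fun t => ⟨(t : E), Set.mem_union_left _ t.2⟩
  have hinc : Continuous inc := continuous_subtype_val.subtype_mk _
  have key : ∀ a : L₁.C0T, (T a).1 s = 0 := by
    intro a
    have hbmem : ∀ i : ι, (fun t : L₁.carrier => ((ψ i (inc t) : ℝ) : ℂ) * a.1 t) ∈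
        {h : L₁.carrier → ℂ | True} := fun _ => trivial
    let b : ι → L₁.C0T := fun i =>
      ⟨⟨⟨fun t => ((ψ i (inc t) : ℝ) : ℂ) * a.1 t,
        (Complex.continuous_ofReal.comp ((hψc i).comp hinc)).mul
          (map_continuous a.1)⟩, by
        simp only [ContinuousMap.coe_mk]
        apply squeeze_zero_norm (a := fun t : L₁.carrier => ‖a.1 t‖)
        · intro t
          rw [norm_mul, Complex.norm_real, Real.norm_eq_abs]
          calc |ψ i (inc t)| * ‖a.1 t‖ ≤ 1 * ‖a.1 t‖ :=
                mul_le_mul_of_nonneg_right (hψ_abs i (inc t)) (norm_nonneg _)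
            _ = ‖a.1 t‖ := one_mul _
        · exact tendsto_zero_iff_norm_tendsto_zero.mp
            (zero_at_infty a.1)⟩, by
        intro z hz t
        show ((ψ i (inc (L₁.sm z hz t)) : ℝ) : ℂ) * a.1 (L₁.sm z hz t) =
          z * (((ψ i (inc t) : ℝ) : ℂ) * a.1 t)
        have h1 : a.1 (L₁.sm z hz t) = z * a.1 t := a.2 z hz t
        have h2 : ψ i (inc (L₁.sm z hz t)) = ψ i (inc t) := by
          have : inc (L₁.sm z hz t) =
              ⟨z • ((inc t : ↥L₁.hat) : E), L₁.hat_smul_mem z hz (inc t).2⟩ :=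
            Subtype.ext rfl
          rw [this, hψ_inv i z hz (inc t)]
        rw [h1, h2]
        ring⟩
    have hsum : ∑ i : ι, b i = a := by
      apply Subtype.ext
      apply DFunLike.ext
      intro t
      rw [C0T_sum_apply]
      show ∑ i : ι, ((ψ i (inc t) : ℝ) : ℂ) * a.1 t = a.1 t
      rw [← Finset.sum_mul, ← Complex.ofReal_sum]
      rw [hψ_sum (inc t)]
      simp
    have hT0 : ∀ i : ι, (T (b i)).1 s = 0 := by
      intro i
      apply hkill i.1 (b i)
      intro x hx
      show ((ψ i (inc x) : ℝ) : ℂ) * a.1 x = 0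
      rw [hψ_zero i (inc x) hx]
      simp
    calc (T a).1 s = (T (∑ i : ι, b i)).1 s := by rw [hsum]
      _ = ((∑ i : ι, T (b i) : L₂.C0T) : C₀(↥L₂.carrier, ℂ)) s := by rw [map_sum]
      _ = ∑ i : ι, (T (b i)).1 s := C0T_sum_apply _ _ _
      _ = 0 := Finset.sum_eq_zero fun i _ => hT0 i
  obtain ⟨a₀, ha₀⟩ := hs
  exact ha₀ (key a₀)

/-- For a linear orthogonality preserving map
`T : C₀^𝕋(L₁) → C₀^𝕋(L₂)` and every `s ∈ L₂` with `δ_s ∘ T ≠ 0`, the set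
`supp(δ_s ∘ T)` is nonempty and is exactly one `𝕋`-orbit. -/
theorem suppDelta_single_orbit (L₁ : TBundle E) (L₂ : TBundle F)
    (T : L₁.C0T →ₗ[ℂ] L₂.C0T) (hT : OrthogonalityPreserving L₁ L₂ T) :
    ∀ s : L₂.carrier, (∃ a : L₁.C0T, (T a).1 s ≠ 0) →
      (suppDelta T s).Nonempty ∧
      (∀ t₁ ∈ suppDelta T s, ∀ t₂ ∈ suppDelta T s, ∃ z : ℂ, ‖z‖ = 1 ∧ t₁ = z • t₂) ∧
      ∃ t ∈ L₁.hat, suppDelta T s = Torbit t := by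
  intro s hs
  have h1 : (suppDelta T s).Nonempty := suppDelta_nonempty L₁ L₂ T s hs
  have h2 := suppDelta_orbit T hT s
  refine ⟨h1, h2, ?_⟩
  obtain ⟨t₀, ht₀⟩ := h1
  refine ⟨t₀, ht₀.1, ?_⟩
  ext x
  constructor
  · intro hx
    exact h2 x hx t₀ ht₀
  · rintro ⟨z, hz, rfl⟩
    exact suppDelta_smul_mem ht₀ z hz


end MainStatements
end
end

section
/- Let L₁ and L₂ be principal 𝕋-bundles and let T : C₀^𝕋(L₁) → C₀^𝕋(L₂) be a (not necessarily continuous) linear orthogonality preserving map. If s ∈ L₂ satisfies δ_s∘T ≠ 0 and a ∈ C₀^𝕋(L₁) satisfies supp(δ_s∘T) ⊄ supp(a) (i.e., some point of supp(δ_s∘T) lies outside the closure of coz(a)), then T(a)(s) = 0. -/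
open scoped ZeroAtInfty

noncomputable section

variable {E F : Type*} [AddCommGroup E] [Module ℂ E] [TopologicalSpace E]
  [AddCommGroup F] [Module ℂ F] [TopologicalSpace F]

section MainStatements

variable [IsTopologicalAddGroup E] [ContinuousSMul ℂ E] [T2Space E]
  [Module ℝ E] [IsScalarTower ℝ ℂ E] [LocallyConvexSpace ℝ E]
  [IsTopologicalAddGroup F] [ContinuousSMul ℂ F] [T2Space F]
  [Module ℝ F] [IsScalarTower ℝ ℂ F] [LocallyConvexSpace ℝ F]

/-- For a linear orthogonality preserving map
`T : C₀^𝕋(L₁) → C₀^𝕋(L₂)`, if `s ∈ L₂` satisfies `δ_s ∘ T ≠ 0` and some point of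
`supp(δ_s ∘ T)` lies outside the closure of the cozero set of `a`, then `T(a)(s) = 0`. -/
theorem eval_eq_zero_of_not_subset_support (L₁ : TBundle E) (L₂ : TBundle F)
    (T : L₁.C0T →ₗ[ℂ] L₂.C0T) (hT : OrthogonalityPreserving L₁ L₂ T)
    (s : L₂.carrier) (hs : ∃ a : L₁.C0T, (T a).1 s ≠ 0)
    (a : L₁.C0T) (ha : ∃ t ∈ suppDelta T s, t ∉ closure (coz a)) :
    (T a).1 s = 0 := by
  obtain ⟨t, ⟨htL, hP⟩, htc⟩ := ha
  -- closure of coz a is 𝕋-symmetric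
  have hcozsym : ∀ (z : ℂ), ‖z‖ = 1 → ∀ x ∈ closure (coz a), z • x ∈ closure (coz a) := by
    intro z hz x hx
    have hcont : Continuous fun y : E => z • y := continuous_const_smul z
    have h1 : (fun y : E => z • y) '' (coz a) ⊆ coz a := by
      rintro _ ⟨y, ⟨u, hu, rfl⟩, rfl⟩
      refine ⟨L₁.sm z hz u, ?_, rfl⟩
      have h2 : a.1 (L₁.sm z hz u) = z * a.1 u := a.2 z hz u
      simp only [Set.mem_setOf_eq, h2]
      exact mul_ne_zero (by intro h0; rw [h0] at hz; simp at hz) hu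
    have := (image_closure_subset_closure_image hcont) ⟨x, hx, rfl⟩
    exact closure_mono h1 this
  set U : Set E := (closure (coz a))ᶜ ∩ L₁.hat with hU
  have htU : t ∈ U := ⟨htc, htL⟩
  have hsymU : TSymm U := by
    rintro z hz x ⟨hx1, hx2⟩
    refine ⟨?_, L₁.hat_smul_mem z hz hx2⟩
    intro hmem
    apply hx1
    have hz0 : z ≠ 0 := by intro h0; rw [h0] at hz; simp at hz
    have := hcozsym z⁻¹ (by simp [hz]) _ hmem
    rwa [smul_smul, inv_mul_cancel₀ hz0, one_smul] at this
  obtain ⟨b, hb, hTb⟩ := hP U htU hsymU ⟨(closure (coz a))ᶜ, isOpen_compl_iff.2 isClosed_closure, rfl⟩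
  have horth : ∀ x : L₁.carrier, a.1 x * b.1 x = 0 := by
    intro x
    by_cases hax : a.1 x = 0
    · simp [hax]
    · have : (x : E) ∉ U := by
        rintro ⟨hx1, -⟩
        exact hx1 (subset_closure ⟨x, hax, rfl⟩)
      simp [hb x this]
  have := hT a b horth s
  exact (mul_eq_zero.1 this).resolve_right hTb

end MainStatements
end
end

section
/- Let L₁ and L₂ be principal 𝕋-bundles and let T : C₀^𝕋(L₁) → C₀^𝕋(L₂) be a (not necessarily continuous) linear orthogonality preserving map. Let ψ : L₂^{nz} → L̂₁ be any map with ψ(s) ∈ supp(δ_s∘T) for all s ∈ L₂^{nz}. Then the map s ↦ q₁(ψ(s)) from L₂^{nz} (with the subspace topology) to the quotient L̂₁/𝕋 is continuous. -/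
open scoped ZeroAtInfty

noncomputable section

variable {E F : Type*} [AddCommGroup E] [Module ℂ E] [TopologicalSpace E]
  [AddCommGroup F] [Module ℂ F] [TopologicalSpace F]

section MainStatements

variable [IsTopologicalAddGroup E] [ContinuousSMul ℂ E] [T2Space E]
  [Module ℝ E] [IsScalarTower ℝ ℂ E] [LocallyConvexSpace ℝ E]
  [IsTopologicalAddGroup F] [ContinuousSMul ℂ F] [T2Space F]
  [Module ℝ F] [IsScalarTower ℝ ℂ F] [LocallyConvexSpace ℝ F]

theorem isOpen_saturate {U₀ : Set E} (hU : IsOpen U₀) :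
    IsOpen {x : E | ∀ z : ℂ, ‖z‖ = 1 → z • x ∈ U₀} := by
  rw [isOpen_iff_forall_mem_open]
  intro x₀ hx₀
  have hn : IsOpen ((fun p : ℂ × E => p.1 • p.2) ⁻¹' U₀) := hU.preimage continuous_smul
  obtain ⟨u, v, hu, hv, hsu, htv, huv⟩ :=
    generalized_tube_lemma (isCompact_sphere (0 : ℂ) 1) isCompact_singleton hn
      (by rintro ⟨z, x⟩ ⟨hz, hx⟩
          simp only [Set.mem_singleton_iff] at hx
          subst hx
          exact hx₀ z (by simpa using hz))
  refine ⟨v, ?_, hv, htv rfl⟩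
  intro x hx z hz
  exact huv (Set.mk_mem_prod (hsu (by simpa using hz)) hx)

/-- For a linear orthogonality preserving map
`T : C₀^𝕋(L₁) → C₀^𝕋(L₂)`, any selection `ψ` of `s ↦ supp(δ_s ∘ T)` on `L₂^{nz}`
induces a continuous map `s ↦ q₁(ψ(s))` from `L₂^{nz}` to `L̂₁/𝕋`. -/
theorem quotient_selection_continuousOn (L₁ : TBundle E) (L₂ : TBundle F)
    (T : L₁.C0T →ₗ[ℂ] L₂.C0T) (hT : OrthogonalityPreserving L₁ L₂ T)
    (ψ : L₂.carrier → ↥L₁.hat) (hψ : ∀ s ∈ Lnz T, (ψ s : E) ∈ suppDelta T s) :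
    ContinuousOn (fun s => Quotient.mk L₁.orbitSetoid (ψ s)) (Lnz T) := by
  intro s hs
  rw [ContinuousWithinAt, Filter.tendsto_def]
  intro W hW
  obtain ⟨W', hW'W, hW'open, hW'mem⟩ := mem_nhds_iff.mp hW
  -- the "bad" set in the subtype and its image in `E`
  set Cset : Set ↥L₁.hat := Quotient.mk L₁.orbitSetoid ⁻¹' W'ᶜ with hCset
  have hq : Continuous (Quotient.mk L₁.orbitSetoid) := continuous_quotient_mk'
  have hCclosed : IsClosed Cset := (hW'open.isClosed_compl).preimage hq
  have hhatcompact : IsCompact (L₁.hat) := L₁.isCompact_union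
  have : CompactSpace ↥L₁.hat := isCompact_iff_compactSpace.mp hhatcompact
  have hCcompact : IsCompact ((↑) '' Cset : Set E) :=
    (hCclosed.isCompact).image continuous_subtype_val
  -- the orbit of `ψ s`
  set K : Set E := (fun z : ℂ => z • (ψ s : E)) '' Metric.sphere 0 1 with hK
  have hKcompact : IsCompact K :=
    (isCompact_sphere (0 : ℂ) 1).image (by continuity)
  -- `z • ψ s` has the same class as `ψ s`
  have horbit : ∀ (z : ℂ), ‖z‖ = 1 → ∀ (h : z • (ψ s : E) ∈ L₁.hat),
      Quotient.mk L₁.orbitSetoid ⟨z • (ψ s : E), h⟩ = Quotient.mk L₁.orbitSetoid (ψ s) :=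
    fun z hz h => (Quotient.sound (⟨z, hz, rfl⟩ : L₁.orbitSetoid.r (ψ s) ⟨z • (ψ s : E), h⟩)).symm
  have hdisj : Disjoint K ((↑) '' Cset : Set E) := by
    rw [Set.disjoint_left]
    rintro x ⟨z, hz, rfl⟩ ⟨c, hc, hcx⟩
    have hz1 : ‖z‖ = 1 := by simpa using hz
    have : Quotient.mk L₁.orbitSetoid c = Quotient.mk L₁.orbitSetoid (ψ s) := by
      have hc2 := c.2
      rw [hcx] at hc2
      have : c = ⟨z • (ψ s : E), hc2⟩ := Subtype.ext hcx
      rw [this]; exact horbit z hz1 hc2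
    exact hc (by rw [this]; exact hW'mem)
  obtain ⟨U₀, V₀, hU₀, hV₀, hKU₀, hCV₀, hU₀V₀⟩ :=
    SeparatedNhds.of_isCompact_isCompact hKcompact hCcompact hdisj
  -- saturated open sets
  set U₁ : Set E := {x : E | ∀ z : ℂ, ‖z‖ = 1 → z • x ∈ U₀} with hU₁def
  set V₁ : Set E := {x : E | ∀ z : ℂ, ‖z‖ = 1 → z • x ∈ V₀} with hV₁def
  have hU₁open : IsOpen U₁ := isOpen_saturate hU₀
  have hV₁open : IsOpen V₁ := isOpen_saturate hV₀
  have hU₁sub : U₁ ⊆ U₀ := fun x hx => by simpa using hx 1 (by simp)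
  have hV₁sub : V₁ ⊆ V₀ := fun x hx => by simpa using hx 1 (by simp)
  have hU₁symm : TSymm (U₁ ∩ L₁.hat) := by
    rintro z hz x ⟨hx1, hx2⟩
    refine ⟨fun w hw => ?_, L₁.hat_smul_mem z hz hx2⟩
    rw [smul_smul]
    exact hx1 (w * z) (by rw [norm_mul, hw, hz, one_mul])
  have hV₁symm : TSymm (V₁ ∩ L₁.hat) := by
    rintro z hz x ⟨hx1, hx2⟩
    refine ⟨fun w hw => ?_, L₁.hat_smul_mem z hz hx2⟩
    rw [smul_smul]
    exact hx1 (w * z) (by rw [norm_mul, hw, hz, one_mul])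
  -- get `a` supported in `U₁` with `T a s ≠ 0`
  have hψsU : (ψ s : E) ∈ U₁ ∩ L₁.hat :=
    ⟨fun z hz => hKU₀ ⟨z, by simpa using hz, rfl⟩, (ψ s).2⟩
  obtain ⟨a, ha0, haTs⟩ := (hψ s hs).2 (U₁ ∩ L₁.hat) hψsU hU₁symm
    ⟨U₁, hU₁open, rfl⟩
  -- the neighbourhood of `s` where `T a ≠ 0`
  refine mem_nhdsWithin.mpr ⟨{s' : L₂.carrier | (T a).1 s' ≠ 0}, ?_, haTs, ?_⟩
  · exact isOpen_compl_singleton.preimage (T a).1.continuous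
  rintro s' ⟨hs'N, hs'nz⟩
  refine hW'W ?_
  by_contra hcon
  -- then `ψ s'` lies in the bad set, hence its orbit is inside `V₀`
  have hψs'C : ∀ z : ℂ, ‖z‖ = 1 → z • (ψ s' : E) ∈ ((↑) '' Cset : Set E) := by
    intro z hz
    have hmem : z • (ψ s' : E) ∈ L₁.hat := L₁.hat_smul_mem z hz (ψ s').2
    refine ⟨⟨z • (ψ s' : E), hmem⟩, ?_, rfl⟩
    have : Quotient.mk L₁.orbitSetoid (⟨z • (ψ s' : E), hmem⟩ : ↥L₁.hat)
        = Quotient.mk L₁.orbitSetoid (ψ s') := (Quotient.sound (⟨z, hz, rfl⟩ : L₁.orbitSetoid.r (ψ s') ⟨z • (ψ s' : E), hmem⟩)).symm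
    simpa [Cset, this] using hcon
  have hψs'V : (ψ s' : E) ∈ V₁ ∩ L₁.hat :=
    ⟨fun z hz => hCV₀ (hψs'C z hz), (ψ s').2⟩
  obtain ⟨b, hb0, hbTs'⟩ := (hψ s' hs'nz).2 (V₁ ∩ L₁.hat) hψs'V hV₁symm
    ⟨V₁, hV₁open, rfl⟩
  -- `a` and `b` are orthogonal
  have horth : ∀ t : L₁.carrier, a.1 t * b.1 t = 0 := by
    intro t
    by_cases h : a.1 t = 0
    · rw [h, zero_mul]
    · have htU : (t : E) ∈ U₁ ∩ L₁.hat := by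
        by_contra htU; exact h (ha0 t htU)
      have htV : (t : E) ∉ V₁ ∩ L₁.hat := by
        intro htV
        exact (Set.disjoint_left.mp hU₀V₀ (hU₁sub htU.1)) (hV₁sub htV.1)
      rw [hb0 t htV, mul_zero]
  have := hT a b horth s'
  rcases mul_eq_zero.mp this with h | h
  · exact hs'N h
  · exact hbTs' h

end MainStatements
end
end

section
/- With L₁, L₂, T, L₂^c, r, φ as in the context: the function r is locally bounded at every point of L₂^c, i.e., for each s₀ ∈ L₂^c there exist a neighborhood W of s₀ in L₂^c and a constant M > 0 such that r(s) ≤ M for all s ∈ W. -/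
open scoped ZeroAtInfty

noncomputable section

variable {E F : Type*} [AddCommGroup E] [Module ℂ E] [TopologicalSpace E]
  [AddCommGroup F] [Module ℂ F] [TopologicalSpace F]

section MainStatements

variable [IsTopologicalAddGroup E] [ContinuousSMul ℂ E] [T2Space E]
  [Module ℝ E] [IsScalarTower ℝ ℂ E] [LocallyConvexSpace ℝ E]
  [IsTopologicalAddGroup F] [ContinuousSMul ℂ F] [T2Space F]
  [Module ℝ F] [IsScalarTower ℝ ℂ F] [LocallyConvexSpace ℝ F]


set_option linter.unusedSectionVars false in
lemma isClosed_C0T (L : TBundle E) : IsClosed (L.C0T : Set C₀(↥L.carrier, ℂ)) := by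
  have heval : ∀ x : L.carrier, Continuous fun a : C₀(↥L.carrier, ℂ) => a x := fun x =>
    (continuous_eval_const (F := BoundedContinuousFunction ↥L.carrier ℂ) x).comp
      ZeroAtInftyContinuousMap.isometry_toBCF.continuous
  have : (L.C0T : Set C₀(↥L.carrier, ℂ)) =
      ⋂ (z : ℂ) (hz : ‖z‖ = 1) (t : L.carrier),
        {a : C₀(↥L.carrier, ℂ) | a (L.sm z hz t) = z * a t} := by
    ext a
    simp only [Set.mem_iInter, Set.mem_setOf_eq]
    rfl
  rw [this]
  refine isClosed_iInter fun z => isClosed_iInter fun hz => isClosed_iInter fun t => ?_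
  exact isClosed_eq (heval _) ((heval t).const_smul z)

set_option linter.unusedSectionVars false in
lemma exists_peak (L : TBundle E) (t₀ : L.carrier) :
    ∃ a : L.C0T, a.1 t₀ = 1 ∧ ∀ t : L.carrier, ‖a.1 t‖ ≤ 1 := by
  haveI : ContinuousSMul ℝ E := IsScalarTower.continuousSMul ℂ
  have ht₀ : (t₀ : E) ≠ 0 := fun h => L.zero_not_mem (h ▸ t₀.2)
  obtain ⟨f, hf⟩ := SeparatingDual.exists_ne_zero (R := ℝ) ht₀
  set g₀ : E →ₗ[ℂ] ℂ := LinearMap.extendTo𝕜' f.toLinearMap with hg₀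
  have hg₀c : Continuous g₀ := by
    have : (g₀ : E → ℂ) = fun x => (f x : ℂ) - Complex.I * (f ((Complex.I : ℂ) • x) : ℂ) := by
      funext x; exact LinearMap.extendTo𝕜'_apply f.toLinearMap x
    rw [this]
    fun_prop
  have hg₀t₀ : g₀ t₀ ≠ 0 := by
    intro h
    have : RCLike.re (g₀ (t₀ : E)) = f (t₀ : E) := LinearMap.extendTo𝕜'_apply_re (𝕜 := ℂ) f.toLinearMap (t₀ : E)
    rw [h] at this
    simp at this
    exact hf this.symm
  set g : E →ₗ[ℂ] ℂ := (g₀ (t₀ : E))⁻¹ • g₀ with hg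
  have hgc : Continuous g := by
    have : (g : E → ℂ) = fun x => (g₀ (t₀ : E))⁻¹ * g₀ x := by
      funext x; simp [hg]
    rw [this]
    exact continuous_const.mul hg₀c
  have hgt₀ : g (t₀ : E) = 1 := by
    simp [hg, inv_mul_cancel₀ hg₀t₀]
  set v : L.carrier → ℂ := fun t => g (t : E) / (max 1 ‖g (t : E)‖ : ℝ) with hv
  have hvc : Continuous v := by
    apply Continuous.div
    · exact hgc.comp continuous_subtype_val
    · fun_prop
    · intro t
      have : (1 : ℝ) ≤ max 1 ‖g (t : E)‖ := le_max_left _ _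
      exact_mod_cast by positivity
  have hvnorm : ∀ t, ‖v t‖ ≤ 1 := by
    intro t
    have h1 : (1 : ℝ) ≤ max 1 ‖g (t : E)‖ := le_max_left _ _
    have h2 : ‖g (t : E)‖ ≤ max 1 ‖g (t : E)‖ := le_max_right _ _
    rw [hv]
    simp only [norm_div, Complex.norm_real, Real.norm_eq_abs,
      abs_of_pos (lt_of_lt_of_le one_pos h1)]
    rw [div_le_one (lt_of_lt_of_le one_pos h1)]
    exact h2
  have hv0 : Filter.Tendsto v (Filter.cocompact L.carrier) (nhds 0) := by
    rw [Metric.tendsto_nhds]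
    intro ε hε
    rw [Filter.hasBasis_cocompact.eventually_iff]
    set C : Set E := L.hat ∩ {x | ε ≤ ‖g x‖} with hC
    have hCsub : C ⊆ L.carrier := by
      rintro x ⟨hx1, hx2⟩
      rcases hx1 with h | h
      · exact h
      · exfalso
        simp only [Set.mem_singleton_iff] at h
        subst h
        simp only [Set.mem_setOf_eq, map_zero, norm_zero] at hx2
        linarith
    have hCcomp : IsCompact C := by
      apply L.isCompact_union.inter_right
      exact isClosed_le continuous_const (continuous_norm.comp hgc)
    refine ⟨Subtype.val ⁻¹' C, ?_, ?_⟩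
    · rw [Subtype.isCompact_iff]
      have : Subtype.val '' (Subtype.val ⁻¹' C : Set L.carrier) = C := by
        rw [Subtype.image_preimage_coe, Set.inter_eq_right.2 hCsub]
      rw [this]
      exact hCcomp
    · intro t ht
      have hgt : ‖g (t : E)‖ < ε := by
        by_contra h
        exact ht ⟨Or.inl t.2, not_lt.1 h⟩
      have h1 : (1 : ℝ) ≤ max 1 ‖g (t : E)‖ := le_max_left _ _
      simp only [dist_zero_right]
      calc ‖v t‖ = ‖g (t : E)‖ / |max 1 ‖g (t : E)‖| := by
            rw [hv]; simp [norm_div]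
        _ ≤ ‖g (t : E)‖ := by
            rw [abs_of_pos (lt_of_lt_of_le one_pos h1)]
            exact div_le_self (norm_nonneg _) h1
        _ < ε := hgt
  set a₀ : C₀(↥L.carrier, ℂ) := ⟨⟨v, hvc⟩, hv0⟩ with ha₀
  have hmem : a₀ ∈ L.C0T := by
    intro z hz t
    show v (L.sm z hz t) = z * v t
    rw [hv]
    simp only [TBundle.sm]
    rw [map_smul g z (t : E)]
    rw [smul_eq_mul, norm_mul, hz, one_mul, mul_div_assoc]
  refine ⟨⟨a₀, hmem⟩, ?_, hvnorm⟩
  show v t₀ = 1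
  rw [hv]
  simp [hgt₀]


/-- Banach–Steinhaus, packaged for unbundled linear functionals. -/
lemma my_banach_steinhaus {D : Type*} [NormedAddCommGroup D] [NormedSpace ℂ D]
    [CompleteSpace D] {ι : Type*} (g : ι → D →ₗ[ℂ] ℂ) (hc : ∀ i, Continuous (g i))
    (hb : ∀ x : D, ∃ C, ∀ i, ‖g i x‖ ≤ C) :
    ∃ C : ℝ, 0 ≤ C ∧ ∀ i, ∀ x : D, ‖g i x‖ ≤ C * ‖x‖ := by
  let G : ι → D →L[ℂ] ℂ := fun i => { toLinearMap := g i, cont := hc i }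
  obtain ⟨C, hC⟩ := banach_steinhaus (g := G) hb
  rcases isEmpty_or_nonempty ι with h | h
  · exact ⟨0, le_refl 0, fun i => (h.false i).elim⟩
  · obtain ⟨i₀⟩ := h
    refine ⟨C, (norm_nonneg (G i₀)).trans (hC i₀), fun i x => ?_⟩
    calc ‖g i x‖ = ‖G i x‖ := rfl
      _ ≤ ‖G i‖ * ‖x‖ := (G i).le_opNorm x
      _ ≤ C * ‖x‖ := by gcongr; exact hC i

set_option maxHeartbeats 1000000 in
/-- With `T`, `L₂^c`, `r`, `φ` as in the context: `r` is locally
bounded at every point of `L₂^c`. -/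
theorem r_locally_bounded (L₁ : TBundle E) (L₂ : TBundle F)
    (T : L₁.C0T →ₗ[ℂ] L₂.C0T) (hT : OrthogonalityPreserving L₁ L₂ T)
    (r : L₂.carrier → ℝ) (φ : L₂.carrier → L₁.carrier)
    (hr : ∀ s ∈ Lcont T, 0 < r s)
    (hrφ : ∀ s ∈ Lcont T, ∀ a : L₁.C0T, (T a).1 s = (r s : ℂ) * a.1 (φ s)) :
    ∀ s₀ ∈ Lcont T, ∃ U : Set L₂.carrier, IsOpen U ∧ s₀ ∈ U ∧
      ∃ M : ℝ, 0 < M ∧ ∀ s ∈ U ∩ Lcont T, r s ≤ M := by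
  intro s₀ hs₀
  haveI : CompleteSpace ↥(L₁.C0T) := (isClosed_C0T L₁).completeSpace_coe
  let G : ↥(Lcont T) → (↥L₁.C0T →ₗ[ℂ] ℂ) := fun s =>
    { toFun := fun a => (T a).1 s.1
      map_add' := fun a b => by simp
      map_smul' := fun c a => by simp }
  have hbound : ∀ a : ↥L₁.C0T, ∃ C, ∀ s : ↥(Lcont T), ‖G s a‖ ≤ C := by
    intro a
    refine ⟨‖(T a).1‖, fun s => ?_⟩
    show ‖(T a).1 s.1‖ ≤ ‖(T a).1‖
    rw [← ZeroAtInftyContinuousMap.norm_toBCF_eq_norm]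
    exact (T a).1.toBCF.norm_coe_le_norm s.1
  letI i1 : NormedAddCommGroup ↥(L₁.C0T) := inferInstance
  letI i2 : @NormedSpace ℂ ↥(L₁.C0T) _ i1.toSeminormedAddCommGroup := L₁.C0T.normedSpace
  haveI i4 : CompleteSpace ↥(L₁.C0T) := (isClosed_C0T L₁).completeSpace_coe
  have hc : ∀ s : ↥(Lcont T), Continuous (G s) := fun s => s.2.2
  obtain ⟨C, hC0, hC⟩ := @my_banach_steinhaus ↥(L₁.C0T) i1 i2 i4 _ G hc hbound
  refine ⟨Set.univ, isOpen_univ, Set.mem_univ _, max C 1,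
    lt_of_lt_of_le one_pos (le_max_right _ _), ?_⟩
  rintro s ⟨-, hsL⟩
  obtain ⟨a, ha1, hale⟩ := exists_peak L₁ (φ s)
  have hanorm : ‖a‖ ≤ 1 := by
    rw [Submodule.coe_norm, ← ZeroAtInftyContinuousMap.norm_toBCF_eq_norm]
    exact (BoundedContinuousFunction.norm_le zero_le_one).2 hale
  have key : r s = ‖G ⟨s, hsL⟩ a‖ := by
    show r s = ‖(T a).1 s‖
    rw [hrφ s hsL a, ha1, mul_one, Complex.norm_real, Real.norm_eq_abs,
      abs_of_pos (hr s hsL)]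
  calc r s = ‖G ⟨s, hsL⟩ a‖ := key
    _ ≤ C * ‖a‖ := hC _ a
    _ ≤ C * 1 := by gcongr
    _ = C := mul_one C
    _ ≤ max C 1 := le_max_left _ _

end MainStatements
end
end

section
/- With L₁, L₂, T, L₂^c, r, φ as in the context: the map φ : L₂^c → L₁ is continuous (where L₂^c carries the subspace topology of L₂ and L₁ its own topology). -/
open scoped ZeroAtInfty

noncomputable section

variable {E F : Type*} [AddCommGroup E] [Module ℂ E] [TopologicalSpace E]
  [AddCommGroup F] [Module ℂ F] [TopologicalSpace F]

section MainStatements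

variable [IsTopologicalAddGroup E] [ContinuousSMul ℂ E] [T2Space E]
  [Module ℝ E] [IsScalarTower ℝ ℂ E] [LocallyConvexSpace ℝ E]
  [IsTopologicalAddGroup F] [ContinuousSMul ℂ F] [T2Space F]
  [Module ℝ F] [IsScalarTower ℝ ℂ F] [LocallyConvexSpace ℝ F]

section Aux

theorem exists_clf {x : E} (hx : x ≠ 0) : ∃ ℓ : E →L[ℂ] ℂ, ℓ x ≠ 0 := by
  have : ContinuousSMul ℝ E := IsScalarTower.continuousSMul ℂ
  obtain ⟨g, hg⟩ := SeparatingDual.exists_ne_zero (R := ℝ) hx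
  refine ⟨StrongDual.extendRCLike g, fun h => hg ?_⟩
  have h2 := StrongDual.re_extendRCLike_apply (𝕜 := ℂ) g x
  rw [h] at h2
  simpa using h2.symm

theorem clf_eq_zero {x : E} (h : ∀ ℓ : E →L[ℂ] ℂ, ℓ x = 0) : x = 0 := by
  by_contra hx
  obtain ⟨ℓ, hℓ⟩ := exists_clf hx
  exact hℓ (h ℓ)

/-- The element of `C₀^𝕋(L)` obtained by restricting a globally defined continuous
equivariant function vanishing at `0`. -/
def TBundle.ofGlobal (L : TBundle E) (B : E → ℂ) (hB : Continuous B) (hB0 : B 0 = 0)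
    (hBeq : ∀ z : ℂ, ‖z‖ = 1 → ∀ x : E, B (z • x) = z * B x) : L.C0T :=
  ⟨{ toFun := fun t : L.carrier => B t
     continuous_toFun := hB.comp continuous_subtype_val
     zero_at_infty' := by
       rw [Metric.tendsto_nhds]
       intro ε hε
       rw [Filter.hasBasis_cocompact.eventually_iff]
       refine ⟨Subtype.val ⁻¹' ((L.carrier ∪ {0}) ∩ {x | ε ≤ ‖B x‖}), ?_, ?_⟩
       · have hD : IsCompact ((L.carrier ∪ {0}) ∩ {x | ε ≤ ‖B x‖}) :=
           L.isCompact_union.inter_right (isClosed_le continuous_const (hB.norm))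
         refine (Topology.IsInducing.subtypeVal.isCompact_preimage_iff ?_).2 hD
         rintro x ⟨hx1, hx2⟩
         rcases hx1 with hx1 | hx1
         · rwa [Subtype.range_coe]
         · exfalso
           rw [Set.mem_singleton_iff] at hx1
           subst hx1
           rw [Set.mem_setOf_eq, hB0, norm_zero] at hx2
           exact absurd hx2 (not_le.2 hε)
       · intro t ht
         rw [dist_zero_right]
         by_contra hcon
         exact ht (Set.mem_preimage.2 ⟨Or.inl t.2, Set.mem_setOf_eq ▸ not_lt.1 hcon⟩)},
   fun z hz t => hBeq z hz t⟩

@[simp] theorem TBundle.ofGlobal_apply (L : TBundle E) (B : E → ℂ) (hB : Continuous B)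
    (hB0 : B 0 = 0) (hBeq : ∀ z : ℂ, ‖z‖ = 1 → ∀ x : E, B (z • x) = z * B x)
    (t : L.carrier) : (L.ofGlobal B hB hB0 hBeq).1 t = B t := rfl

end Aux

open Filter Topology

/-- With `T`, `L₂^c`, `r`, `φ` as in the context: `φ` is continuous
on `L₂^c`. -/
theorem phi_continuousOn (L₁ : TBundle E) (L₂ : TBundle F)
    (T : L₁.C0T →ₗ[ℂ] L₂.C0T) (hT : OrthogonalityPreserving L₁ L₂ T)
    (r : L₂.carrier → ℝ) (φ : L₂.carrier → L₁.carrier)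
    (hr : ∀ s ∈ Lcont T, 0 < r s)
    (hrφ : ∀ s ∈ Lcont T, ∀ a : L₁.C0T, (T a).1 s = (r s : ℂ) * a.1 (φ s)) :
    ContinuousOn φ (Lcont T) := by
  intro s hs
  rw [ContinuousWithinAt, Topology.IsEmbedding.subtypeVal.tendsto_nhds_iff]
  rw [Filter.tendsto_iff_ultrafilter]
  intro u hu
  have husmem : ∀ᶠ s' in ↑u, s' ∈ Lcont T := hu self_mem_nhdsWithin
  have hus : Tendsto (fun s' : L₂.carrier => s') ↑u (𝓝 s) := hu.trans nhdsWithin_le_nhds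
  -- a cluster point `y₀` of `s' ↦ φ s'` in the compact set `L̂₁`
  obtain ⟨y₀, hy₀mem, hy₀⟩ := L₁.isCompact_union.ultrafilter_le_nhds
      (u.map fun s' => ((φ s' : E)))
      (le_principal_iff.2 (Ultrafilter.mem_map.2
        (Filter.Eventually.of_forall fun s' => Or.inl (φ s').2)))
  have hψy : Tendsto (fun s' => ((φ s' : E))) ↑u (𝓝 y₀) := hy₀
  have hT' : ∀ b : L₁.C0T, Tendsto (fun s' => (T b).1 s') ↑u (𝓝 ((T b).1 s)) :=
    fun b => ((T b).1.continuous.tendsto s).comp hus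
  have hev : ∀ b : L₁.C0T, ∀ᶠ s' in ↑u, (T b).1 s' = ((r s' : ℝ) : ℂ) * b.1 (φ s') :=
    fun b => husmem.mono fun s' h => hrφ s' h b
  have hrpos : ∀ᶠ s' in ↑u, 0 < r s' := husmem.mono fun s' h => hr s' h
  have hrs : 0 < r s := hr s hs
  have hφs0 : (φ s : E) ≠ 0 := fun h => L₁.zero_not_mem (h ▸ (φ s).2)
  obtain ⟨a₀, ha₀⟩ := hs.1
  rcases hy₀mem with hyc | hy0
  · -- `y₀` lies in `L₁`
    have hy₀ne : y₀ ≠ 0 := fun h => L₁.zero_not_mem (h ▸ hyc)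
    obtain ⟨ℓ, hℓ⟩ := exists_clf hy₀ne
    set aℓ : L₁.C0T := L₁.ofGlobal (fun x => ℓ x) ℓ.continuous (map_zero ℓ)
      (fun z hz x => by simp) with haℓ
    have hψℓ : Tendsto (fun s' => ℓ ((φ s' : E))) ↑u (𝓝 (ℓ y₀)) :=
      (ℓ.continuous.tendsto y₀).comp hψy
    have hevne : ∀ᶠ s' in ↑u, ℓ ((φ s' : E)) ≠ 0 := hψℓ.eventually_ne hℓ
    set ρ : ℂ := (T aℓ).1 s / ℓ y₀ with hρdef
    have hrt : Tendsto (fun s' => ((r s' : ℝ) : ℂ)) ↑u (𝓝 ρ) := by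
      have h1 : (fun s' => ((r s' : ℝ) : ℂ)) =ᶠ[↑u]
          fun s' => (T aℓ).1 s' / ℓ ((φ s' : E)) := by
        filter_upwards [hev aℓ, hevne] with s' h hne
        rw [h, TBundle.ofGlobal_apply, mul_div_assoc, div_self hne, mul_one]
      rw [tendsto_congr' h1]
      exact (hT' aℓ).div hψℓ hℓ
    have star : ∀ (B : E → ℂ) (hc : Continuous B) (h0 : B 0 = 0)
        (heq : ∀ z : ℂ, ‖z‖ = 1 → ∀ x : E, B (z • x) = z * B x),
        (T (L₁.ofGlobal B hc h0 heq)).1 s = ρ * B y₀ := by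
      intro B hc h0 heq
      refine tendsto_nhds_unique (hT' _) ?_
      have h2 : Tendsto (fun s' => ((r s' : ℝ) : ℂ) * B ((φ s' : E))) ↑u (𝓝 (ρ * B y₀)) :=
        hrt.mul ((hc.tendsto y₀).comp hψy)
      exact h2.congr' ((hev _).mono fun s' h => h.symm)
    have hρ : ρ ≠ 0 := by
      intro h
      refine ha₀ (tendsto_nhds_unique (hT' a₀) ?_)
      rw [tendsto_zero_iff_norm_tendsto_zero]
      have hb1 : ∀ᶠ s' in ↑u, ‖(T a₀).1 s'‖ ≤ ‖((r s' : ℝ) : ℂ)‖ * ‖a₀.1‖ := by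
        filter_upwards [hev a₀] with s' he
        rw [he, norm_mul]
        refine mul_le_mul_of_nonneg_left ?_ (norm_nonneg _)
        rw [← ZeroAtInftyContinuousMap.norm_toBCF_eq_norm]
        exact a₀.1.toBCF.norm_coe_le_norm _
      refine squeeze_zero' (Filter.Eventually.of_forall fun _ => norm_nonneg _) hb1 ?_
      rw [h] at hrt
      simpa using hrt.norm.mul_const ‖a₀.1‖
    have hreal : ρ.im = 0 ∧ 0 ≤ ρ.re := by
      have hcl : IsClosed {z : ℂ | z.im = 0 ∧ 0 ≤ z.re} :=
        (isClosed_eq Complex.continuous_im continuous_const).inter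
          (isClosed_le continuous_const Complex.continuous_re)
      exact hcl.mem_of_tendsto hrt
        (hrpos.mono fun s' h => by simp [Complex.ofReal_im, Complex.ofReal_re, le_of_lt h])
    have hρre : 0 < ρ.re := by
      rcases lt_or_eq_of_le hreal.2 with h | h
      · exact h
      · exact absurd (Complex.ext h.symm hreal.1) hρ
    have hρeq : ρ = ((ρ.re : ℝ) : ℂ) := Complex.ext (by simp) (by simp [hreal.1])
    have hρne : ((ρ.re : ℝ) : ℂ) ≠ 0 := by
      simpa using ne_of_gt hρre
    -- identify `y₀` as a positive multiple of `φ s`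
    have hlin : ∀ m : E →L[ℂ] ℂ, ((r s : ℝ) : ℂ) * m ((φ s : E)) = ρ * m y₀ := by
      intro m
      have h1 := star (fun x => m x) m.continuous (map_zero m)
        (fun z hz x => by simp)
      have h2 := hrφ s hs (L₁.ofGlobal (fun x => m x) m.continuous (map_zero m)
        (fun z hz x => by simp))
      rw [h1, TBundle.ofGlobal_apply] at h2
      exact h2.symm
    have hyeq : ((r s : ℝ) : ℂ) • ((φ s : E)) = ρ • y₀ := by
      have h0 : ((r s : ℝ) : ℂ) • ((φ s : E)) - ρ • y₀ = 0 := by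
        refine clf_eq_zero fun m => ?_
        rw [map_sub, map_smul, map_smul, smul_eq_mul, smul_eq_mul, hlin m, sub_self]
      exact sub_eq_zero.1 h0
    set c : ℝ := r s / ρ.re with hcdef
    have hcpos : 0 < c := div_pos hrs hρre
    have hy₀eq : y₀ = ((c : ℝ) : ℂ) • ((φ s : E)) := by
      have h1 : ((ρ.re : ℝ) : ℂ) • y₀ = ((r s : ℝ) : ℂ) • ((φ s : E)) := by
        rw [← hρeq, ← hyeq]
      calc y₀ = ((ρ.re : ℝ) : ℂ)⁻¹ • (((ρ.re : ℝ) : ℂ) • y₀) := by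
              rw [smul_smul, inv_mul_cancel₀ hρne, one_smul]
        _ = ((c : ℝ) : ℂ) • ((φ s : E)) := by
              rw [h1, smul_smul, hcdef]
              norm_num [Complex.ofReal_div, div_eq_inv_mul]
    by_cases hc1 : c = 1
    · rw [hy₀eq, hc1] at hψy
      simpa [Function.comp_def] using hψy
    · exfalso
      -- construct an equivariant function separating the orbits of `φ s` and `y₀`
      have hℓφ : ℓ ((φ s : E)) ≠ 0 := by
        intro h
        apply hℓ
        rw [hy₀eq, map_smul, smul_eq_mul, h, mul_zero]
      set α : ℝ := ‖ℓ ((φ s : E))‖ with hαdef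
      set β : ℝ := ‖ℓ y₀‖ with hβdef
      have hαpos : 0 < α := norm_pos_iff.2 hℓφ
      have hβα : β = c * α := by
        rw [hβdef, hy₀eq, map_smul, smul_eq_mul, norm_mul, Complex.norm_real,
          Real.norm_eq_abs, abs_of_pos hcpos, hαdef]
      have hαβ : α - β ≠ 0 := by
        rw [hβα]
        intro h
        apply hc1
        have h2 : c * α = 1 * α := by linarith
        exact mul_right_cancel₀ (ne_of_gt hαpos) h2
      set B : E → ℂ := fun x => ((((‖ℓ x‖ - β) / (α - β) : ℝ)) : ℂ) * ℓ x with hBdef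
      have hBcont : Continuous B := by
        apply Continuous.mul _ ℓ.continuous
        exact Complex.continuous_ofReal.comp ((ℓ.continuous.norm.sub continuous_const).div_const _)
      have hB0 : B 0 = 0 := by simp [hBdef]
      have hBeq : ∀ z : ℂ, ‖z‖ = 1 → ∀ x : E, B (z • x) = z * B x := by
        intro z hz x
        simp only [hBdef, map_smul, smul_eq_mul, norm_mul, hz, one_mul]
        ring
      have h1 := star B hBcont hB0 hBeq
      have h2 := hrφ s hs (L₁.ofGlobal B hBcont hB0 hBeq)
      rw [h1, TBundle.ofGlobal_apply] at h2
      have hBy : B y₀ = 0 := by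
        rw [hBdef]
        simp only [← hβdef, sub_self, zero_div, Complex.ofReal_zero, zero_mul]
      have hBφ : B ((φ s : E)) = ℓ ((φ s : E)) := by
        rw [hBdef]
        simp only [← hαdef, div_self hαβ, Complex.ofReal_one, one_mul]
      rw [hBy, hBφ, mul_zero] at h2
      rcases mul_eq_zero.1 h2.symm with h | h
      · exact absurd h (by simpa using ne_of_gt hrs)
      · exact hℓφ h
  · -- `y₀ = 0`: impossible
    exfalso
    simp only [Set.mem_singleton_iff] at hy0
    subst hy0
    obtain ⟨ℓ, hℓ⟩ := exists_clf hφs0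
    set α : ℝ := ‖ℓ ((φ s : E))‖ with hαdef
    have hαpos : 0 < α := norm_pos_iff.2 hℓ
    set B : E → ℂ := fun x => (((max 0 ((2 * ‖ℓ x‖ - α) / α) : ℝ)) : ℂ) * ℓ x with hBdef
    have hBcont : Continuous B := by
      apply Continuous.mul _ ℓ.continuous
      exact Complex.continuous_ofReal.comp
        ((continuous_const.max (((continuous_const.mul ℓ.continuous.norm).sub continuous_const).div_const _)))
    have hB0 : B 0 = 0 := by simp [hBdef]
    have hBeq : ∀ z : ℂ, ‖z‖ = 1 → ∀ x : E, B (z • x) = z * B x := by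
      intro z hz x
      simp only [hBdef, map_smul, smul_eq_mul, norm_mul, hz, one_mul]
      ring
    set b : L₁.C0T := L₁.ofGlobal B hBcont hB0 hBeq with hbdef
    have hb : (T b).1 s = ((r s : ℝ) : ℂ) * B ((φ s : E)) := by
      have := hrφ s hs b
      rwa [hbdef, TBundle.ofGlobal_apply] at this
    have hBφ : B ((φ s : E)) = ℓ ((φ s : E)) := by
      rw [hBdef]
      have h1 : (2 * ‖ℓ ((φ s : E))‖ - α) / α = 1 := by
        rw [← hαdef]; field_simp; ring
      simp only [hBdef]
      rw [h1]
      norm_num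
    -- eventually `B (φ s') = 0`
    have hℓ0 : Tendsto (fun s' => ‖ℓ ((φ s' : E))‖) ↑u (𝓝 0) := by
      have := (ℓ.continuous.tendsto (0 : E)).comp hψy
      rw [map_zero] at this
      simpa using this.norm
    have hevB : ∀ᶠ s' in ↑u, B ((φ s' : E)) = 0 := by
      have hsmall : ∀ᶠ s' in ↑u, ‖ℓ ((φ s' : E))‖ < α / 2 :=
        hℓ0.eventually (eventually_lt_nhds (by positivity))
      filter_upwards [hsmall] with s' hsm
      rw [hBdef]
      have h1 : max 0 ((2 * ‖ℓ ((φ s' : E))‖ - α) / α) = 0 := by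
        apply max_eq_left
        apply div_nonpos_of_nonpos_of_nonneg _ (le_of_lt hαpos)
        linarith
      simp only [h1, Complex.ofReal_zero, zero_mul]
    have hzero : (T b).1 s = 0 := by
      refine tendsto_nhds_unique (hT' b) ?_
      have h2 : (fun s' => (T b).1 s') =ᶠ[↑u] fun _ => (0 : ℂ) := by
        filter_upwards [hev b, hevB] with s' he hB'
        rw [he, hbdef, TBundle.ofGlobal_apply, hB', mul_zero]
      rw [tendsto_congr' h2]
      exact tendsto_const_nhds
    rw [hb, hBφ] at hzero
    rcases mul_eq_zero.1 hzero with h | h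
    · exact absurd h (by simpa using ne_of_gt hrs)
    · exact hℓ h

end MainStatements
end
end

section
/- With L₁, L₂, T, L₂^c, r, φ as in the context: the function r : L₂^c → (0, ∞) is continuous (where L₂^c carries the subspace topology of L₂). -/
open scoped ZeroAtInfty

noncomputable section

variable {E F : Type*} [AddCommGroup E] [Module ℂ E] [TopologicalSpace E]
  [AddCommGroup F] [Module ℂ F] [TopologicalSpace F]

open Filter Topology in
/-- Multiplying an element of `C₀^𝕋(L)` by a bounded continuous `𝕋`-invariant scalar
field of the form `G ∘ ‖a ·‖` stays in `C₀^𝕋(L)`. -/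
def TBundle.smulC0T (L : TBundle E) (a : L.C0T) (G : ℝ → ℝ) (hG : Continuous G)
    (hGb : ∀ x, |G x| ≤ 1) : L.C0T := by
  refine ⟨⟨⟨fun t => (G ‖a.1 t‖ : ℂ) * a.1 t, ?_⟩, ?_⟩, ?_⟩
  · exact (Complex.continuous_ofReal.comp (hG.comp ((map_continuous a.1).norm))).mul
      (map_continuous a.1)
  · apply squeeze_zero_norm (a := fun t => ‖a.1 t‖)
    · intro t
      rw [norm_mul, Complex.norm_real, Real.norm_eq_abs]
      calc |G ‖a.1 t‖| * ‖a.1 t‖ ≤ 1 * ‖a.1 t‖ :=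
            mul_le_mul_of_nonneg_right (hGb _) (norm_nonneg _)
        _ = ‖a.1 t‖ := one_mul _
    · simpa using a.1.zero_at_infty'.norm
  · show ∀ (z : ℂ) (hz : ‖z‖ = 1) (t : L.carrier),
      (G ‖a.1 (L.sm z hz t)‖ : ℂ) * a.1 (L.sm z hz t) = z * ((G ‖a.1 t‖ : ℂ) * a.1 t)
    intro z hz t
    have h1 : a.1 (L.sm z hz t) = z * a.1 t := a.2 z hz t
    have h2 : ‖a.1 (L.sm z hz t)‖ = ‖a.1 t‖ := by rw [h1, norm_mul, hz, one_mul]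
    rw [h2, h1]; ring

@[simp] theorem TBundle.smulC0T_apply (L : TBundle E) (a : L.C0T) (G : ℝ → ℝ)
    (hG : Continuous G) (hGb : ∀ x, |G x| ≤ 1) (t : L.carrier) :
    (L.smulC0T a G hG hGb).1 t = (G ‖a.1 t‖ : ℂ) * a.1 t := rfl

/-- The clamp of a real number to `[0, 1]`. -/
noncomputable def clamp01 (x : ℝ) : ℝ := max 0 (min 1 x)

theorem clamp01_continuous : Continuous clamp01 :=
  continuous_const.max (continuous_const.min continuous_id)

theorem clamp01_abs_le (x : ℝ) : |clamp01 x| ≤ 1 := by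
  rw [abs_le]
  refine ⟨le_trans (by norm_num) (le_max_left _ _), max_le (by norm_num) (min_le_left _ _)⟩

theorem clamp01_eq_one {x : ℝ} (h : 1 ≤ x) : clamp01 x = 1 := by
  rw [clamp01, min_eq_left h]; exact max_eq_right zero_le_one

theorem clamp01_eq_zero_iff {x : ℝ} : clamp01 x = 0 ↔ x ≤ 0 := by
  constructor
  · intro h
    by_contra hx
    push_neg at hx
    have h1 : 0 < min 1 x := lt_min one_pos hx
    rw [clamp01, max_eq_right h1.le] at h
    exact absurd h h1.ne'
  · intro h
    rw [clamp01, min_eq_right (le_trans h zero_le_one), max_eq_left h]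

section MainStatements

variable [IsTopologicalAddGroup E] [ContinuousSMul ℂ E] [T2Space E]
  [Module ℝ E] [IsScalarTower ℝ ℂ E] [LocallyConvexSpace ℝ E]
  [IsTopologicalAddGroup F] [ContinuousSMul ℂ F] [T2Space F]
  [Module ℝ F] [IsScalarTower ℝ ℂ F] [LocallyConvexSpace ℝ F]

/-- An elementary arithmetic estimate used in the proof of `r_continuousOn`. -/
theorem final_est {R c ε δ y rs A : ℝ} (hR : 0 < R) (hc : 0 < c) (hδ : 0 < δ)
    (hrs : 0 < rs) (hy : 0 < y) (hε0 : 0 < ε) (hε1 : ε ≤ c / 2)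
    (hε2 : 4 * (1 + R) * ε ≤ δ * c) (hylb : c - ε ≤ y) (hyub : y ≤ c + ε)
    (hnorm : rs * y = A) (hA1 : R * c - ε < A) (hA2 : A < R * c + ε) :
    |rs - R| < δ := by
  rw [abs_sub_lt_iff]
  have hyc : c / 2 ≤ y := by linarith
  constructor
  · nlinarith [mul_pos hδ hy, mul_pos hR hε0]
  · nlinarith [mul_pos hδ hy, mul_pos hR hε0]

open Filter Topology in
set_option maxHeartbeats 1000000 in
/-- With `T`, `L₂^c`, `r`, `φ` as in the context: `r` is continuous
on `L₂^c`. -/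
theorem r_continuousOn (L₁ : TBundle E) (L₂ : TBundle F)
    (T : L₁.C0T →ₗ[ℂ] L₂.C0T) (hT : OrthogonalityPreserving L₁ L₂ T)
    (r : L₂.carrier → ℝ) (φ : L₂.carrier → L₁.carrier)
    (hr : ∀ s ∈ Lcont T, 0 < r s)
    (hrφ : ∀ s ∈ Lcont T, ∀ a : L₁.C0T, (T a).1 s = (r s : ℂ) * a.1 (φ s)) :
    ContinuousOn r (Lcont T) := by
  intro s₀ hs₀
  obtain ⟨⟨a, ha⟩, -⟩ := id hs₀
  have hR : 0 < r s₀ := hr s₀ hs₀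
  have haφ : a.1 (φ s₀) ≠ 0 := by
    intro h
    exact ha (by rw [hrφ s₀ hs₀ a, h, mul_zero])
  set R := r s₀ with hRdef
  set c := ‖a.1 (φ s₀)‖ with hcdef
  have hc0 : 0 < c := norm_pos_iff.mpr haφ
  refine Metric.tendsto_nhds.mpr ?_
  intro δ hδ
  set ε := min (c / 2) (δ * c / (4 * (1 + R))) with hεdef
  have hε0 : 0 < ε := lt_min (by positivity) (by positivity)
  have hε1 : ε ≤ c / 2 := min_le_left _ _
  have hε2 : 4 * (1 + R) * ε ≤ δ * c := by
    have h4R : (0:ℝ) < 4 * (1 + R) := by positivity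
    have := (le_div_iff₀ h4R).mp (min_le_right (c / 2) (δ * c / (4 * (1 + R))))
    linarith
  -- the four cut-off multipliers
  set u₁ : ℝ → ℝ := fun x => clamp01 ((x - (c - ε / 2)) * (4 / ε)) with hu₁def
  set v₁ : ℝ → ℝ := fun x => clamp01 (((c - ε / 2) - x) * (2 / ε)) with hv₁def
  set u₂ : ℝ → ℝ := fun x => clamp01 (((c + ε / 2) - x) * (4 / ε)) with hu₂def
  set v₂ : ℝ → ℝ := fun x => clamp01 ((x - (c + ε / 2)) * (2 / ε)) with hv₂def
  have hu₁c : Continuous u₁ := clamp01_continuous.comp (by fun_prop)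
  have hv₁c : Continuous v₁ := clamp01_continuous.comp (by fun_prop)
  have hu₂c : Continuous u₂ := clamp01_continuous.comp (by fun_prop)
  have hv₂c : Continuous v₂ := clamp01_continuous.comp (by fun_prop)
  set b₁ := L₁.smulC0T a u₁ hu₁c (fun x => clamp01_abs_le _) with hb₁def
  set d₁ := L₁.smulC0T a v₁ hv₁c (fun x => clamp01_abs_le _) with hd₁def
  set b₂ := L₁.smulC0T a u₂ hu₂c (fun x => clamp01_abs_le _) with hb₂def
  set d₂ := L₁.smulC0T a v₂ hv₂c (fun x => clamp01_abs_le _) with hd₂def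
  -- pointwise orthogonality of the two pairs
  have huv₁ : ∀ x : ℝ, u₁ x * v₁ x = 0 := by
    intro x
    rcases le_total x (c - ε / 2) with h | h
    · have : u₁ x = 0 := clamp01_eq_zero_iff.mpr
        (mul_nonpos_of_nonpos_of_nonneg (by linarith) (by positivity))
      rw [this, zero_mul]
    · have : v₁ x = 0 := clamp01_eq_zero_iff.mpr
        (mul_nonpos_of_nonpos_of_nonneg (by linarith) (by positivity))
      rw [this, mul_zero]
  have huv₂ : ∀ x : ℝ, u₂ x * v₂ x = 0 := by
    intro x
    rcases le_total x (c + ε / 2) with h | h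
    · have : v₂ x = 0 := clamp01_eq_zero_iff.mpr
        (mul_nonpos_of_nonpos_of_nonneg (by linarith) (by positivity))
      rw [this, mul_zero]
    · have : u₂ x = 0 := clamp01_eq_zero_iff.mpr
        (mul_nonpos_of_nonpos_of_nonneg (by linarith) (by positivity))
      rw [this, zero_mul]
  have hbd₁ : ∀ t : L₁.carrier, b₁.1 t * d₁.1 t = 0 := by
    intro t
    rw [hb₁def, hd₁def, TBundle.smulC0T_apply, TBundle.smulC0T_apply]
    calc (u₁ ‖a.1 t‖ : ℂ) * a.1 t * ((v₁ ‖a.1 t‖ : ℂ) * a.1 t)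
        = ((u₁ ‖a.1 t‖ * v₁ ‖a.1 t‖ : ℝ) : ℂ) * (a.1 t * a.1 t) := by push_cast; ring
      _ = 0 := by rw [huv₁, Complex.ofReal_zero, zero_mul]
  have hbd₂ : ∀ t : L₁.carrier, b₂.1 t * d₂.1 t = 0 := by
    intro t
    rw [hb₂def, hd₂def, TBundle.smulC0T_apply, TBundle.smulC0T_apply]
    calc (u₂ ‖a.1 t‖ : ℂ) * a.1 t * ((v₂ ‖a.1 t‖ : ℂ) * a.1 t)
        = ((u₂ ‖a.1 t‖ * v₂ ‖a.1 t‖ : ℝ) : ℂ) * (a.1 t * a.1 t) := by push_cast; ring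
      _ = 0 := by rw [huv₂, Complex.ofReal_zero, zero_mul]
  -- T b₁ and T b₂ are nonzero at s₀
  have hTb₁ : (T b₁).1 s₀ ≠ 0 := by
    rw [hrφ s₀ hs₀ b₁, hb₁def, TBundle.smulC0T_apply, ← hcdef]
    have h1 : u₁ c = 1 := by
      apply clamp01_eq_one
      have h2 : (c - (c - ε / 2)) * (4 / ε) = 2 := by field_simp; ring
      rw [h2]; norm_num
    rw [h1]
    simp only [Complex.ofReal_one, one_mul]
    exact mul_ne_zero (by exact_mod_cast hR.ne') haφ
  have hTb₂ : (T b₂).1 s₀ ≠ 0 := by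
    rw [hrφ s₀ hs₀ b₂, hb₂def, TBundle.smulC0T_apply, ← hcdef]
    have h1 : u₂ c = 1 := by
      apply clamp01_eq_one
      have h2 : (c + ε / 2 - c) * (4 / ε) = 2 := by field_simp; ring
      rw [h2]; norm_num
    rw [h1]
    simp only [Complex.ofReal_one, one_mul]
    exact mul_ne_zero (by exact_mod_cast hR.ne') haφ
  -- the eventual facts
  have ev₁ : ∀ᶠ s in 𝓝[Lcont T] s₀, (T d₁).1 s = 0 := by
    have h := ((map_continuous (T b₁).1).continuousAt (x := s₀)).eventually_ne hTb₁
    filter_upwards [h.filter_mono nhdsWithin_le_nhds] with s hs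
    exact (mul_eq_zero.mp (hT b₁ d₁ hbd₁ s)).resolve_left hs
  have ev₂ : ∀ᶠ s in 𝓝[Lcont T] s₀, (T d₂).1 s = 0 := by
    have h := ((map_continuous (T b₂).1).continuousAt (x := s₀)).eventually_ne hTb₂
    filter_upwards [h.filter_mono nhdsWithin_le_nhds] with s hs
    exact (mul_eq_zero.mp (hT b₂ d₂ hbd₂ s)).resolve_left hs
  have ev₃ : ∀ᶠ s in 𝓝[Lcont T] s₀, (T a).1 s ≠ 0 :=
    (((map_continuous (T a).1).continuousAt (x := s₀)).eventually_ne ha).filter_mono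
      nhdsWithin_le_nhds
  have ev₄ : ∀ᶠ s in 𝓝[Lcont T] s₀, dist ((T a).1 s) ((T a).1 s₀) < ε :=
    (Metric.tendsto_nhds.mp ((map_continuous (T a).1).continuousAt (x := s₀)) ε hε0).filter_mono
      nhdsWithin_le_nhds
  filter_upwards [ev₁, ev₂, ev₃, ev₄, self_mem_nhdsWithin] with s h1 h2 h3 h4 hsmem
  -- now the pointwise estimate
  have hrs : 0 < r s := hr s hsmem
  have haφs : a.1 (φ s) ≠ 0 := by
    intro h
    exact h3 (by rw [hrφ s hsmem a, h, mul_zero])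
  set y := ‖a.1 (φ s)‖ with hydef
  have hy0 : 0 < y := norm_pos_iff.mpr haφs
  have hrsC : ((r s : ℝ) : ℂ) ≠ 0 := by exact_mod_cast hrs.ne'
  have hd₁0 : (v₁ y : ℂ) * a.1 (φ s) = 0 := by
    have he := hrφ s hsmem d₁
    rw [h1] at he
    have := (mul_eq_zero.mp he.symm).resolve_left hrsC
    rw [hd₁def, TBundle.smulC0T_apply] at this
    exact this
  have hd₂0 : (v₂ y : ℂ) * a.1 (φ s) = 0 := by
    have he := hrφ s hsmem d₂
    rw [h2] at he
    have := (mul_eq_zero.mp he.symm).resolve_left hrsC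
    rw [hd₂def, TBundle.smulC0T_apply] at this
    exact this
  have hv₁0 : v₁ y = 0 := by
    have := (mul_eq_zero.mp hd₁0).resolve_right haφs
    exact_mod_cast this
  have hv₂0 : v₂ y = 0 := by
    have := (mul_eq_zero.mp hd₂0).resolve_right haφs
    exact_mod_cast this
  have hylb : c - ε ≤ y := by
    have h := clamp01_eq_zero_iff.mp hv₁0
    have hε0' : (0:ℝ) < 2 / ε := by positivity
    nlinarith
  have hyub : y ≤ c + ε := by
    have h := clamp01_eq_zero_iff.mp hv₂0
    have hε0' : (0:ℝ) < 2 / ε := by positivity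
    nlinarith
  have hnorm : r s * y = ‖(T a).1 s‖ := by
    rw [hrφ s hsmem a, norm_mul, Complex.norm_real, Real.norm_eq_abs, abs_of_pos hrs, hydef]
  have hnorm₀ : ‖(T a).1 s₀‖ = R * c := by
    rw [hrφ s₀ hs₀ a, norm_mul, Complex.norm_real, Real.norm_eq_abs, abs_of_pos hR, hcdef]
  have hclose : |‖(T a).1 s‖ - R * c| < ε := by
    rw [← hnorm₀]
    calc |‖(T a).1 s‖ - ‖(T a).1 s₀‖| ≤ ‖(T a).1 s - (T a).1 s₀‖ :=
          abs_norm_sub_norm_le _ _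
      _ < ε := by rw [← dist_eq_norm]; exact h4
  rw [Real.dist_eq]
  obtain ⟨hA1, hA2⟩ := abs_lt.mp hclose
  exact final_est hR hc0 hδ hrs hy0 hε0 hε1 hε2 hylb hyub hnorm (by linarith) (by linarith)


end MainStatements
end
end
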